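/- Let (Ω, F, P) be a probability space with a filtration F_0 ⊆ F_1 ⊆ … ⊆ F_{K+1} ⊆ F, and for l = 0,…,K let L¹_l and L²_l be nonnegative integrable random variables that are F_{l+1}-measurable and satisfy E(L¹_l | F_l) = 1 and E(L²_l | F_l) = 1 almost surely. Then E[∏_{l=0}^{K} √(L¹_l L²_l)] ≥ ∏_{l=0}^{K} (1 − (1/2) ess sup E[(√(L¹_l) − √(L²_l))² | F_l]). -/

import Mathlib

set_option maxHeartbeats 1000000


open MeasureTheory Real

/-- If `X` is nonnegative, integrable and `m`-measurable, `Y` is nonnegative and integrable,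
and `E[Y | m] ≤ 1` a.e., then `X * Y` is integrable. -/
lemma integrable_mul_of_condexp_le_one {Ω : Type*} [mΩ : MeasurableSpace Ω] (P : Measure Ω)
    [IsProbabilityMeasure P] {m : MeasurableSpace Ω} (hm : m ≤ mΩ) {X Y : Ω → ℝ}
    (hXm : StronglyMeasurable[m] X) (hXnn : ∀ ω, 0 ≤ X ω) (hXint : Integrable X P)
    (hYint : Integrable Y P) (hYnn : ∀ ω, 0 ≤ Y ω)
    (hce : P[Y | m] ≤ᵐ[P] fun _ => (1 : ℝ)) :
    Integrable (fun ω => X ω * Y ω) P := by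
  have hXam : AEStronglyMeasurable[mΩ] X P := (hXm.mono hm).aestronglyMeasurable
  have hmeas : AEStronglyMeasurable[mΩ] (fun ω => X ω * Y ω) P :=
    hXam.mul hYint.aestronglyMeasurable
  set Xk : ℕ → Ω → ℝ := fun k ω => min (X ω) k with hXkdef
  have hXkm : ∀ k, StronglyMeasurable[m] (Xk k) := fun k =>
    (hXm.measurable.min measurable_const).stronglyMeasurable
  have hXknn : ∀ k ω, 0 ≤ Xk k ω := fun k ω => le_min (hXnn ω) (Nat.cast_nonneg k)
  have hXkY_int : ∀ k, Integrable (Xk k * Y) P := by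
    intro k
    refine hYint.bdd_mul (c := (k : ℝ)) ((hXkm k).mono hm).aestronglyMeasurable (ae_of_all _ fun ω => ?_)
    rw [Real.norm_eq_abs, abs_of_nonneg (hXknn k ω)]
    exact min_le_right _ _
  have hXk_int : ∀ k, Integrable (Xk k) P := by
    intro k
    refine hXint.mono ((hXkm k).mono hm).aestronglyMeasurable (ae_of_all _ fun ω => ?_)
    rw [Real.norm_eq_abs, Real.norm_eq_abs, abs_of_nonneg (hXknn k ω), abs_of_nonneg (hXnn ω)]
    exact min_le_left _ _
  have key : ∀ k, ∫ ω, (Xk k * Y) ω ∂P ≤ ∫ ω, X ω ∂P := by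
    intro k
    have hmul := condExp_mul_of_stronglyMeasurable_left (μ := P) (hXkm k) (hXkY_int k) hYint
    have h1 : ∫ ω, (Xk k * Y) ω ∂P = ∫ ω, (Xk k * P[Y | m]) ω ∂P := by
      rw [← integral_condExp hm (f := Xk k * Y)]
      exact integral_congr_ae hmul
    have h2 : Integrable (Xk k * P[Y | m]) P := integrable_condExp.congr hmul
    rw [h1]
    calc ∫ ω, (Xk k * P[Y | m]) ω ∂P ≤ ∫ ω, Xk k ω ∂P := by
          refine integral_mono_ae h2 (hXk_int k) ?_
          filter_upwards [hce] with ω hω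
          exact mul_le_of_le_one_right (hXknn k ω) hω
      _ ≤ ∫ ω, X ω ∂P :=
          integral_mono (hXk_int k) hXint fun ω => min_le_left _ _
  refine ⟨hmeas, ?_⟩
  rw [hasFiniteIntegral_iff_ofReal (ae_of_all _ fun ω => mul_nonneg (hXnn ω) (hYnn ω))]
  have hpt : ∀ ω, ENNReal.ofReal (X ω * Y ω) = ⨆ k : ℕ, ENNReal.ofReal (Xk k ω * Y ω) := by
    intro ω
    refine le_antisymm ?_ (iSup_le fun k => ENNReal.ofReal_le_ofReal
      (mul_le_mul_of_nonneg_right (min_le_left _ _) (hYnn ω)))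
    refine le_trans ?_ (le_iSup (fun k : ℕ => ENNReal.ofReal (Xk k ω * Y ω)) (Nat.ceil (X ω)))
    have : Xk (Nat.ceil (X ω)) ω = X ω := min_eq_left (Nat.le_ceil (X ω))
    rw [this]
  calc ∫⁻ ω, ENNReal.ofReal (X ω * Y ω) ∂P
      = ∫⁻ ω, ⨆ k : ℕ, ENNReal.ofReal (Xk k ω * Y ω) ∂P := by simp_rw [hpt]
    _ = ⨆ k : ℕ, ∫⁻ ω, ENNReal.ofReal (Xk k ω * Y ω) ∂P := by
        refine lintegral_iSup' (fun k => ENNReal.measurable_ofReal.comp_aemeasurable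
          ((hXkY_int k).aestronglyMeasurable.aemeasurable)) (ae_of_all _ fun ω => ?_)
        intro a b hab
        exact ENNReal.ofReal_le_ofReal (mul_le_mul_of_nonneg_right
          (min_le_min le_rfl (Nat.cast_le.2 hab)) (hYnn ω))
    _ ≤ ENNReal.ofReal (∫ ω, X ω ∂P) := by
        refine iSup_le fun k => ?_
        refine le_trans (le_of_eq (ofReal_integral_eq_lintegral_ofReal (hXkY_int k)
          (ae_of_all _ fun ω => mul_nonneg (hXknn k ω) (hYnn ω))).symm)
          (ENNReal.ofReal_le_ofReal (key k))
    _ < ⊤ := ENNReal.ofReal_lt_top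

/-- essSup bound for a.e.-nonnegative real functions on a probability space. -/
lemma essSup_le_of_ae_le_of_nonneg {Ω : Type*} [MeasurableSpace Ω] (P : Measure Ω)
    [IsProbabilityMeasure P] {f : Ω → ℝ} (c : ℝ) (h : f ≤ᵐ[P] fun _ => c)
    (h0 : (0 : Ω → ℝ) ≤ᵐ[P] f) : essSup f P ≤ c := by
  haveI : (MeasureTheory.ae P).NeBot := ae_neBot.2 (IsProbabilityMeasure.ne_zero P)
  refine Filter.limsup_le_of_le (Filter.IsBoundedUnder.isCoboundedUnder_le ⟨0, ?_⟩) h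
  rw [Filter.eventually_map]
  filter_upwards [h0] with ω hω using hω

/-- Lower bound on the expected product of square roots of conditional likelihood
ratios (inner estimate in the proof of Lemma 3.1 of Grama–Neumann). -/
theorem product_sqrt_likelihood_lower_bound
    {Ω : Type*} [mΩ : MeasurableSpace Ω] (P : Measure Ω) [IsProbabilityMeasure P]
    (K : ℕ) (F : ℕ → MeasurableSpace Ω)
    (hF_mono : ∀ l, l ≤ K → F l ≤ F (l + 1))
    (hF_le : ∀ l, l ≤ K + 1 → F l ≤ mΩ)
    (L1 L2 : ℕ → Ω → ℝ)
    (hL1_nonneg : ∀ l, l ≤ K → ∀ ω, 0 ≤ L1 l ω)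
    (hL2_nonneg : ∀ l, l ≤ K → ∀ ω, 0 ≤ L2 l ω)
    (hL1_int : ∀ l, l ≤ K → Integrable (L1 l) P)
    (hL2_int : ∀ l, l ≤ K → Integrable (L2 l) P)
    (hL1_meas : ∀ l, l ≤ K → StronglyMeasurable[F (l + 1)] (L1 l))
    (hL2_meas : ∀ l, l ≤ K → StronglyMeasurable[F (l + 1)] (L2 l))
    (hL1_ce : ∀ l, l ≤ K → P[L1 l | F l] =ᵐ[P] fun _ => (1 : ℝ))
    (hL2_ce : ∀ l, l ≤ K → P[L2 l | F l] =ᵐ[P] fun _ => (1 : ℝ)) :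
    ∏ l ∈ Finset.range (K + 1),
        (1 - (1 / 2) *
          essSup (P[fun ω => (Real.sqrt (L1 l ω) - Real.sqrt (L2 l ω)) ^ 2 | F l]) P)
      ≤ ∫ ω, ∏ l ∈ Finset.range (K + 1), Real.sqrt (L1 l ω * L2 l ω) ∂P := by
  -- abbreviations
  set g : ℕ → Ω → ℝ := fun l ω => Real.sqrt (L1 l ω * L2 l ω) with hgdef
  set q : ℕ → Ω → ℝ := fun l ω => (Real.sqrt (L1 l ω) - Real.sqrt (L2 l ω)) ^ 2 with hqdef
  set c : ℕ → ℝ := fun l => 1 - (1 / 2) * essSup (P[q l | F l]) P with hcdef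
  -- monotonicity of the filtration
  have hFm : ∀ i j, i ≤ j → j ≤ K + 1 → F i ≤ F j := by
    intro i j hij hj
    induction j with
    | zero => exact le_of_eq (congrArg F (Nat.le_zero.mp hij))
    | succ j ihj =>
      rcases Nat.lt_or_ge i (j + 1) with h | h
      · exact le_trans (ihj (Nat.lt_succ_iff.mp h) (le_trans (Nat.le_succ j) hj))
          (hF_mono j (Nat.succ_le_succ_iff.mp hj))
      · exact le_of_eq (congrArg F (le_antisymm hij h))
  -- basic facts about g
  have hg_nn : ∀ l ω, 0 ≤ g l ω := fun l ω => Real.sqrt_nonneg _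
  have hg_meas : ∀ l, l ≤ K → StronglyMeasurable[F (l + 1)] (g l) := fun l hl =>
    Real.continuous_sqrt.comp_stronglyMeasurable ((hL1_meas l hl).mul (hL2_meas l hl))
  have hg_le : ∀ l, l ≤ K → ∀ ω, g l ω ≤ (L1 l ω + L2 l ω) / 2 := by
    intro l hl ω
    have ha := hL1_nonneg l hl ω
    have hb := hL2_nonneg l hl ω
    have h2 : (L1 l ω + L2 l ω) / 2 = Real.sqrt (((L1 l ω + L2 l ω) / 2) ^ 2) :=
      (Real.sqrt_sq (by positivity)).symm
    rw [h2]
    exact Real.sqrt_le_sqrt (by nlinarith [sq_nonneg (L1 l ω - L2 l ω)])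
  have hg_int : ∀ l, l ≤ K → Integrable (g l) P := by
    intro l hl
    refine (((hL1_int l hl).add (hL2_int l hl)).div_const 2).mono
      (((hg_meas l hl).mono (hF_le (l + 1) (by omega))).aestronglyMeasurable)
      (ae_of_all _ fun ω => ?_)
    rw [Real.norm_eq_abs, Real.norm_eq_abs, abs_of_nonneg (hg_nn l ω)]
    exact le_trans (hg_le l hl ω) (le_abs_self _)
  -- pointwise identity for q
  have hq_eq : ∀ l, l ≤ K → ∀ ω, q l ω = L1 l ω + L2 l ω - 2 * g l ω := by
    intro l hl ω
    have ha := hL1_nonneg l hl ω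
    have hb := hL2_nonneg l hl ω
    have h1 : Real.sqrt (L1 l ω) ^ 2 = L1 l ω := Real.sq_sqrt ha
    have h2 : Real.sqrt (L2 l ω) ^ 2 = L2 l ω := Real.sq_sqrt hb
    have h3 : g l ω = Real.sqrt (L1 l ω) * Real.sqrt (L2 l ω) := Real.sqrt_mul ha _
    simp only [hqdef]
    rw [h3, sub_sq, h1, h2]
    ring
  have hq_int : ∀ l, l ≤ K → Integrable (q l) P := by
    intro l hl
    have : Integrable (fun ω => L1 l ω + L2 l ω - 2 * g l ω) P :=
      ((hL1_int l hl).add (hL2_int l hl)).sub ((hg_int l hl).const_mul 2)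
    exact this.congr (ae_of_all _ fun ω => (hq_eq l hl ω).symm)
  -- conditional expectation identity
  have hce_q : ∀ l, l ≤ K →
      P[q l | F l] =ᵐ[P] fun ω => 2 - 2 * (P[g l | F l]) ω := by
    intro l hl
    have hq : P[q l | F l] =ᵐ[P] P[(L1 l + L2 l) - (2 : ℝ) • g l | F l] :=
      condExp_congr_ae (ae_of_all _ fun ω => by
        simpa [Pi.sub_apply, Pi.add_apply, smul_eq_mul] using hq_eq l hl ω)
    have hsub := condExp_sub (μ := P) (m := F l)
      ((hL1_int l hl).add (hL2_int l hl)) ((hg_int l hl).smul (2 : ℝ))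
    have hadd := condExp_add (μ := P) (m := F l) (hL1_int l hl) (hL2_int l hl)
    have hsmul := condExp_smul (μ := P) (m := F l) (2 : ℝ) (g l)
    filter_upwards [hq, hsub, hadd, hsmul, hL1_ce l hl, hL2_ce l hl]
      with ω h0 h1 h2 h3 h4 h5
    rw [h0, h1]
    simp only [Pi.sub_apply]
    rw [h2, h3]
    simp only [Pi.add_apply, Pi.smul_apply, smul_eq_mul] at *
    rw [h4, h5]
    ring
  have hq_nn_ce : ∀ l, l ≤ K → (0 : Ω → ℝ) ≤ᵐ[P] P[q l | F l] := fun l hl =>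
    condExp_nonneg (ae_of_all _ fun ω => sq_nonneg _)
  have hg_nn_ce : ∀ l, l ≤ K → (0 : Ω → ℝ) ≤ᵐ[P] P[g l | F l] := fun l hl =>
    condExp_nonneg (ae_of_all _ fun ω => hg_nn l ω)
  have hq_le_two : ∀ l, l ≤ K → P[q l | F l] ≤ᵐ[P] fun _ => (2 : ℝ) := by
    intro l hl
    filter_upwards [hce_q l hl, hg_nn_ce l hl] with ω h1 h2
    rw [h1]
    simp only [Pi.zero_apply] at h2
    linarith
  have hc_nonneg : ∀ l, l ≤ K → 0 ≤ c l := by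
    intro l hl
    have h2 : essSup (P[q l | F l]) P ≤ 2 := essSup_le_of_ae_le_of_nonneg P 2 (hq_le_two l hl) (hq_nn_ce l hl)
    simp only [hcdef]
    linarith
  have hg_ce_le_one : ∀ l, l ≤ K → P[g l | F l] ≤ᵐ[P] fun _ => (1 : ℝ) := by
    intro l hl
    filter_upwards [hce_q l hl, hq_nn_ce l hl] with ω h1 h2
    simp only [Pi.zero_apply] at h2
    rw [h1] at h2
    linarith
  have hg_ce_ge : ∀ l, l ≤ K → ∀ᵐ ω ∂P, c l ≤ (P[g l | F l]) ω := by
    intro l hl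
    have hbdd : Filter.IsBoundedUnder (· ≤ ·) (ae P) (P[q l | F l]) :=
      ⟨2, by rw [Filter.eventually_map]; exact hq_le_two l hl⟩
    filter_upwards [hce_q l hl, ae_le_essSup hbdd] with ω h1 h2
    have : (P[g l | F l]) ω = 1 - (1 / 2) * (P[q l | F l]) ω := by rw [h1] at *; linarith
    rw [this]
    simp only [hcdef]
    linarith
  -- main induction
  have main : ∀ n, n ≤ K + 1 →
      StronglyMeasurable[F n] (fun ω => ∏ l ∈ Finset.range n, g l ω) ∧
      Integrable (fun ω => ∏ l ∈ Finset.range n, g l ω) P ∧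
      ∏ l ∈ Finset.range n, c l ≤ ∫ ω, ∏ l ∈ Finset.range n, g l ω ∂P := by
    intro n
    induction n with
    | zero =>
      intro _
      simp only [Finset.range_zero, Finset.prod_empty]
      exact ⟨stronglyMeasurable_const, integrable_const 1, by simp⟩
    | succ n ihn =>
      intro hn
      have hnK : n ≤ K := Nat.succ_le_succ_iff.mp hn
      obtain ⟨hSM, hInt, hLB⟩ := ihn (le_trans (Nat.le_succ n) hn)
      have hPnn : ∀ ω, 0 ≤ ∏ l ∈ Finset.range n, g l ω := fun ω =>
        Finset.prod_nonneg fun l _ => hg_nn l ω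
      have hInt2 : Integrable (fun ω => (∏ l ∈ Finset.range n, g l ω) * g n ω) P :=
        integrable_mul_of_condexp_le_one P (hF_le n (by omega)) hSM hPnn hInt
          (hg_int n hnK) (hg_nn n) (hg_ce_le_one n hnK)
      have hSM' : StronglyMeasurable[F (n + 1)] (fun ω => ∏ l ∈ Finset.range (n + 1), g l ω) := by
        have : StronglyMeasurable[F (n + 1)] (fun ω => (∏ l ∈ Finset.range n, g l ω) * g n ω) :=
          (hSM.mono (hF_mono n hnK)).mul (hg_meas n hnK)
        simpa [Finset.prod_range_succ] using this
      have hInt' : Integrable (fun ω => ∏ l ∈ Finset.range (n + 1), g l ω) P := by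
        simpa [Finset.prod_range_succ] using hInt2
      refine ⟨hSM', hInt', ?_⟩
      have hmul := condExp_mul_of_stronglyMeasurable_left (μ := P) (m := F n) hSM
        (by exact hInt2) (hg_int n hnK)
      have heq : ∫ ω, ∏ l ∈ Finset.range (n + 1), g l ω ∂P
          = ∫ ω, (∏ l ∈ Finset.range n, g l ω) * (P[g n | F n]) ω ∂P := by
        simp_rw [Finset.prod_range_succ]
        rw [← integral_condExp (hF_le n (by omega))
          (f := fun ω => (∏ l ∈ Finset.range n, g l ω) * g n ω)]
        exact integral_congr_ae hmul
      have hcondint : Integrable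
          (fun ω => (∏ l ∈ Finset.range n, g l ω) * (P[g n | F n]) ω) P :=
        integrable_condExp.congr hmul
      calc ∏ l ∈ Finset.range (n + 1), c l
          = c n * ∏ l ∈ Finset.range n, c l := by rw [Finset.prod_range_succ]; ring
        _ ≤ c n * ∫ ω, ∏ l ∈ Finset.range n, g l ω ∂P :=
            mul_le_mul_of_nonneg_left hLB (hc_nonneg n hnK)
        _ = ∫ ω, c n * ∏ l ∈ Finset.range n, g l ω ∂P := (integral_const_mul _ _).symm
        _ ≤ ∫ ω, (∏ l ∈ Finset.range n, g l ω) * (P[g n | F n]) ω ∂P := by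
            refine integral_mono_ae (hInt.const_mul _) hcondint ?_
            filter_upwards [hg_ce_ge n hnK] with ω hω
            rw [mul_comm]
            exact mul_le_mul_of_nonneg_left hω (hPnn ω)
        _ = ∫ ω, ∏ l ∈ Finset.range (n + 1), g l ω ∂P := heq.symm
  exact (main (K + 1) le_rfl).2.2
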